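/- Let n be a nonnegative integer and let a, b be elements of a commutative ring (in particular, integers or real numbers). Then Σ_{k=0}^{n} C(n+k,2k) · C(2k,k) · (a-b)^(n-k) · b^k = Σ_{k=0}^{n} C(n,k)² · a^(n-k) · b^k. -/

import Mathlib

open Finset

lemma nat_key (n m : ℕ) (h : m ≤ n) :
    (n + m).choose (2 * m) * (2 * m).choose m =
      ∑ k ∈ range (m + 1), n.choose k * n.choose k * (n - k).choose (m - k) := by
  have h1 : (n + m).choose (2 * m) * (2 * m).choose m = (n + m).choose m * n.choose m := by
    have h2 := Nat.choose_mul (n := n + m) (k := 2 * m) (s := m) (by omega)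
    have e1 : n + m - m = n := by omega
    have e2 : 2 * m - m = m := by omega
    rw [h2, e1, e2]
  rw [h1, Nat.add_choose_eq, Finset.Nat.sum_antidiagonal_eq_sum_range_succ_mk, Finset.sum_mul]
  refine Finset.sum_congr rfl fun k hk => ?_
  have hkm : k ≤ m := by simpa [Nat.lt_succ_iff] using hk
  calc n.choose k * m.choose (m - k) * n.choose m
      = n.choose k * (n.choose m * m.choose k) := by rw [Nat.choose_symm hkm]; ring
    _ = n.choose k * (n.choose k * (n - k).choose (m - k)) := by
        rw [Nat.choose_mul hkm]
    _ = n.choose k * n.choose k * (n - k).choose (m - k) := by ring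

theorem binomial_transform_identity' {R : Type*} [CommRing R] (n : ℕ) (a b : R) :
    ∑ k ∈ range (n + 1),
        (Nat.choose (n + k) (2 * k) : R) * (Nat.choose (2 * k) k : R) *
          (a - b) ^ (n - k) * b ^ k =
      ∑ k ∈ range (n + 1), (Nat.choose n k : R) ^ 2 * a ^ (n - k) * b ^ k := by
  have key : ∀ m ∈ range (n + 1),
      ((n + m).choose (2 * m) : R) * ((2 * m).choose m : R) * (a - b) ^ (n - m) * b ^ m =
        ∑ k ∈ range (m + 1),
          (n.choose k : R) * (n.choose k : R) * ((n - k).choose (m - k) : R) *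
            (a - b) ^ (n - m) * b ^ m := by
    intro m hm
    have hmn : m ≤ n := by simpa [Nat.lt_succ_iff] using hm
    rw [← Nat.cast_mul, nat_key n m hmn, Nat.cast_sum, Finset.sum_mul, Finset.sum_mul]
    refine Finset.sum_congr rfl fun k _ => ?_
    push_cast
    ring
  rw [Finset.sum_congr rfl key]
  simp_rw [Finset.range_eq_Ico]
  rw [← Finset.sum_Ico_Ico_comm 0 (n + 1)
      (fun k m => (n.choose k : R) * (n.choose k : R) * ((n - k).choose (m - k) : R) *
        (a - b) ^ (n - m) * b ^ m)]
  refine Finset.sum_congr rfl fun k hk => ?_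
  have hkn : k ≤ n := by
    simp only [Finset.mem_Ico] at hk; omega
  rw [Finset.sum_Ico_eq_sum_range]
  have hrange : n + 1 - k = (n - k) + 1 := by omega
  rw [hrange]
  have inner : ∀ j ∈ range ((n - k) + 1),
      (n.choose k : R) * (n.choose k : R) * ((n - k).choose (k + j - k) : R) *
        (a - b) ^ (n - (k + j)) * b ^ (k + j) =
      (n.choose k : R) * (n.choose k : R) * b ^ k *
        (b ^ j * (a - b) ^ ((n - k) - j) * ((n - k).choose j : R)) := by
    intro j hj
    have hj' : j ≤ n - k := by simpa [Nat.lt_succ_iff] using hj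
    have e1 : n - (k + j) = (n - k) - j := by omega
    have e2 : k + j - k = j := by omega
    rw [e2, pow_add]
    rw [show (a - b) ^ (n - (k + j)) = (a - b) ^ ((n - k) - j) by rw [e1]]
    ring
  rw [Finset.sum_congr rfl inner, ← Finset.mul_sum, ← add_pow]
  have : b + (a - b) = a := by ring
  rw [this]
  ring
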